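/- Perfect tree theorem: for every tree T on ℕ, either the set [T] of branches of T is countable, or T has a perfect subtree, i.e., a nonempty subset T' ⊆ T which is itself a tree and in which every element has two incomparable extensions belonging to T'. -/

import Mathlib

/-- A tree on ℕ: a set of finite sequences of naturals closed under initial segments. -/
def IsTree (T : Set (List ℕ)) : Prop :=
  ∀ s ∈ T, ∀ t : List ℕ, t <+: s → t ∈ T

/-- `x : ℕ → ℕ` is a branch of `T`: all of its finite initial segments belong to `T`. -/
def IsBranch (T : Set (List ℕ)) (x : ℕ → ℕ) : Prop :=
  ∀ n : ℕ, (List.range n).map x ∈ T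

/-- `[T]`, the set of branches of `T`. -/
def Branches (T : Set (List ℕ)) : Set (ℕ → ℕ) := {x | IsBranch T x}

/-- The Kleene–Brouwer ordering on finite sequences of naturals: `s <_KB t` iff
`t` is a proper initial segment of `s`, or at the first position where `s` and `t`
differ, the entry of `s` is smaller. -/
def KB (s t : List ℕ) : Prop :=
  (t <+: s ∧ t ≠ s) ∨
    ∃ i, i < s.length ∧ i < t.length ∧ (∀ j, j < i → s.getD j 0 = t.getD j 0) ∧
      s.getD i 0 < t.getD i 0

/-- A tree is perfect if every element has two incomparable extensions in the tree. -/
def PerfectTree (T : Set (List ℕ)) : Prop :=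
  ∀ s ∈ T, ∃ u ∈ T, ∃ w ∈ T, s <+: u ∧ s <+: w ∧ ¬u <+: w ∧ ¬w <+: u

/-- perfect tree theorem.  For every tree `T` on ℕ, either `[T]`
is countable or `T` has a perfect subtree. -/
def restrictL (x : ℕ → ℕ) (n : ℕ) : List ℕ := (List.range n).map x

lemma length_restrictL (x : ℕ → ℕ) (n : ℕ) : (restrictL x n).length = n := by
  simp [restrictL]

lemma restrictL_take (x : ℕ → ℕ) {m n : ℕ} (h : m ≤ n) :
    (restrictL x n).take m = restrictL x m := by
  simp [restrictL, ← List.map_take, List.take_range, Nat.min_eq_left h]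

lemma restrictL_prefix (x : ℕ → ℕ) {m n : ℕ} (h : m ≤ n) :
    restrictL x m <+: restrictL x n := by
  rw [← restrictL_take x h]; exact List.take_prefix _ _

lemma restrictL_getD (x : ℕ → ℕ) {n m : ℕ} (h : n < m) :
    (restrictL x m).getD n 0 = x n := by
  rw [List.getD_eq_getElem _ _ (by simpa [length_restrictL] using h)]
  simp [restrictL]

/-- branches through `s` -/
def Bset (T : Set (List ℕ)) (s : List ℕ) : Set (ℕ → ℕ) :=
  {x | IsBranch T x ∧ restrictL x s.length = s}

lemma Bset_nil (T : Set (List ℕ)) : Bset T [] = Branches T := by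
  ext x; simp [Bset, Branches, restrictL, IsBranch]

lemma prefix_of_mem_Bset {T s x} (hx : x ∈ Bset T s) {m : ℕ} (h : s.length ≤ m) :
    s <+: restrictL x m := by
  rw [← hx.2]; exact restrictL_prefix x h

theorem perfect_tree_theorem (T : Set (List ℕ)) (hT : IsTree T) :
    (Branches T).Countable ∨
      ∃ T' : Set (List ℕ), T' ⊆ T ∧ T'.Nonempty ∧ IsTree T' ∧ PerfectTree T' := by
  by_cases hc : (Branches T).Countable
  · exact Or.inl hc
  right
  refine ⟨{s : List ℕ | ¬ (Bset T s).Countable}, ?_, ?_, ?_, ?_⟩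
  · -- subset of T
    intro s hs
    have hne : (Bset T s).Nonempty := by
      rcases Set.eq_empty_or_nonempty (Bset T s) with h | h
      · exact absurd (h ▸ Set.countable_empty) hs
      · exact h
    obtain ⟨x, hx⟩ := hne
    have := hx.1 s.length
    rwa [show (List.range s.length).map x = s from hx.2] at this
  · -- nonempty
    exact ⟨[], by simpa [Bset_nil] using hc⟩
  · -- tree
    intro s hs t hts
    simp only [Set.mem_setOf_eq] at hs ⊢
    intro hcnt
    apply hs
    refine hcnt.mono ?_
    intro x hx
    refine ⟨hx.1, ?_⟩
    have hlen : t.length ≤ s.length := hts.length_le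
    calc restrictL x t.length = (restrictL x s.length).take t.length :=
          (restrictL_take x hlen).symm
      _ = s.take t.length := by rw [hx.2]
      _ = t := (List.prefix_iff_eq_take.mp hts).symm
  · -- perfect
    intro s hs
    by_contra hcon
    push_neg at hcon
    apply hs
    set T' := {s : List ℕ | ¬ (Bset T s).Countable} with hT'
    set A := {x ∈ Bset T s | ∀ n, restrictL x n ∈ T'} with hA
    have hAsub : A.Subsingleton := by
      intro x hx y hy
      by_contra hxy
      obtain ⟨n, hn⟩ := Function.ne_iff.mp hxy
      have hns : s.length ≤ n := by
        by_contra h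
        push_neg at h
        have hxn : (restrictL x s.length).getD n 0 = x n := restrictL_getD x h
        have hyn : (restrictL y s.length).getD n 0 = y n := restrictL_getD y h
        rw [hx.1.2] at hxn
        rw [hy.1.2] at hyn
        exact hn (hxn ▸ hyn ▸ rfl)
      have hux : restrictL x (n+1) ∈ T' := hx.2 (n+1)
      have huy : restrictL y (n+1) ∈ T' := hy.2 (n+1)
      have hd : restrictL x (n+1) ≠ restrictL y (n+1) := by
        intro h
        apply hn
        have h2 := congrArg (fun l => l.getD n 0) h
        rwa [restrictL_getD x (Nat.lt_succ_self n), restrictL_getD y (Nat.lt_succ_self n)] at h2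
      have hwu := hcon _ hux _ huy (prefix_of_mem_Bset hx.1 (hns.trans (Nat.le_succ n)))
        (prefix_of_mem_Bset hy.1 (hns.trans (Nat.le_succ n)))
        (fun h => hd (h.eq_of_length (by simp [length_restrictL])))
      exact hd (hwu.eq_of_length (by simp [length_restrictL])).symm
    have cover : Bset T s ⊆ A ∪ ⋃ t ∈ {t : List ℕ | t ∉ T'}, Bset T t := by
      intro x hx
      by_cases hall : ∀ n, restrictL x n ∈ T'
      · exact Or.inl ⟨hx, hall⟩
      · push_neg at hall
        obtain ⟨n, hn⟩ := hall
        refine Or.inr (Set.mem_biUnion hn ?_)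
        exact ⟨hx.1, by rw [length_restrictL]⟩
    refine Set.Countable.mono cover (hAsub.countable.union ?_)
    refine (Set.to_countable _).biUnion fun t ht => ?_
    exact not_not.mp ht
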